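/- arXiv:0910.0635 — 4 statements merged into one kernel-verified Lean document; each statement's English description precedes it below -/
import Mathlib

section
/- For an odd prime p = 2q+1 and a natural number k coprime to p, the product over j = 1 to q of sin(jkπ/p) equals (-1)^((k-1)(p²-1)/8) · (k/p) · 2^(−q) · √p, where (k/p) is the Legendre symbol. If p divides k, the product is 0. -/
open Finset Polynomial

lemma prod_sub_zeta {n : ℕ} (hn : 0 < n) {ζ : ℂ} (hζ : IsPrimitiveRoot ζ n) (x : ℂ) :
    ∏ j ∈ Finset.range n, (x - ζ ^ j) = x ^ n - 1 := by
  have hmonic : (X ^ n - C (1 : ℂ)).Monic := monic_X_pow_sub_C (1 : ℂ) hn.ne'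
  have hroots : (X ^ n - C (1 : ℂ)).roots = (Multiset.range n).map (fun j => ζ ^ j * 1) := by
    rw [← Polynomial.nthRoots, hζ.nthRoots_eq (one_pow n)]
  have hcard : Multiset.card (X ^ n - C (1 : ℂ)).roots = (X ^ n - C (1 : ℂ)).natDegree := by
    rw [hroots, Multiset.card_map, Multiset.card_range, natDegree_X_pow_sub_C]
  have := prod_multiset_X_sub_C_of_monic_of_roots_card_eq hmonic hcard
  have hev := congrArg (Polynomial.eval x) this
  rw [Polynomial.eval_multiset_prod, hroots, Multiset.map_map, Multiset.map_map] at hev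
  simp only [Function.comp, eval_sub, eval_X, eval_C, eval_pow, mul_one] at hev
  rw [← hev, Finset.prod_eq_multiset_prod]
  simp [Finset.range_val]

lemma prod_one_sub_zeta {n : ℕ} (hn : 0 < n) {ζ : ℂ} (hζ : IsPrimitiveRoot ζ n) :
    ∏ j ∈ Finset.Ico 1 n, ((1 : ℂ) - ζ ^ j) = n := by
  have key : ∀ x : ℂ, x ≠ 1 → ∏ j ∈ Finset.Ico 1 n, (x - ζ ^ j) = ∑ i ∈ Finset.range n, x ^ i := by
    intro x hx
    have h1 : (x - 1) * ∏ j ∈ Finset.Ico 1 n, (x - ζ ^ j) = x ^ n - 1 := by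
      rw [← prod_sub_zeta hn hζ x, Finset.range_eq_Ico,
        Finset.prod_eq_prod_Ico_succ_bot hn]
      simp
    have h2 : (x - 1) * ∑ i ∈ Finset.range n, x ^ i = x ^ n - 1 := by
      rw [mul_comm, geom_sum_mul]
    exact mul_left_cancel₀ (sub_ne_zero.mpr hx) (h1.trans h2.symm)
  have hc1 : Continuous fun x : ℂ => ∏ j ∈ Finset.Ico 1 n, (x - ζ ^ j) := by
    exact continuous_finset_prod _ (fun j _ => by continuity)
  have hc2 : Continuous fun x : ℂ => ∑ i ∈ Finset.range n, x ^ i := by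
    exact continuous_finset_sum _ (fun i _ => by continuity)
  have hd : Dense ({(1 : ℂ)}ᶜ) := dense_compl_singleton _
  have heq : (fun x : ℂ => ∏ j ∈ Finset.Ico 1 n, (x - ζ ^ j)) =
      fun x : ℂ => ∑ i ∈ Finset.range n, x ^ i :=
    Continuous.ext_on hd hc1 hc2 (fun x hx => key x hx)
  have := congrFun heq 1
  simpa using this

lemma abs_one_sub_exp (θ : ℝ) : ‖1 - Complex.exp (θ * Complex.I)‖ =
    2 * |Real.sin (θ / 2)| := by
  set z : ℂ := ((θ/2 : ℝ) : ℂ) with hz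
  have h : (1 : ℂ) - Complex.exp (θ * Complex.I) =
      Complex.exp (z * Complex.I) * (-2 * Complex.I) * Real.sin (θ/2) := by
    rw [Complex.ofReal_sin, Complex.sin]
    have h1 : Complex.exp (z * Complex.I) * (-2 * Complex.I) *
        ((Complex.exp (-z * Complex.I) - Complex.exp (z * Complex.I)) * Complex.I / 2) =
        Complex.exp (z * Complex.I) * Complex.exp (-z * Complex.I) -
          Complex.exp (z * Complex.I) * Complex.exp (z * Complex.I) := by
      have hI : Complex.I * Complex.I = -1 := Complex.I_mul_I
      ring_nf
      rw [Complex.I_sq]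
      ring
    rw [h1, ← Complex.exp_add, ← Complex.exp_add]
    have : z * Complex.I + -z * Complex.I = 0 := by ring
    rw [this, Complex.exp_zero]
    congr 2
    rw [hz]
    push_cast
    ring
  rw [h]
  rw [norm_mul, norm_mul]
  rw [Complex.norm_exp_ofReal_mul_I, Complex.norm_real, Real.norm_eq_abs]
  have : ‖-2 * Complex.I‖ = 2 := by
    simp
  rw [this]
  ring

lemma sin_prod_eq (p q : ℕ) (hpq : p = 2*q+1) (hq : 0 < q) :
    ∏ j ∈ Finset.Icc 1 q, Real.sin (j * Real.pi / p) = Real.sqrt p / 2^q := by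
  have hp : (0:ℕ) < p := by omega
  have hζ := Complex.isPrimitiveRoot_exp p hp.ne'
  set ζ : ℂ := Complex.exp (2 * Real.pi * Complex.I / p) with hzdef
  have habs : ∀ j : ℕ, ‖1 - ζ ^ j‖ = 2 * |Real.sin (j * Real.pi / p)| := by
    intro j
    have : ζ ^ j = Complex.exp (((2 * Real.pi * j / p : ℝ) : ℂ) * Complex.I) := by
      rw [hzdef, ← Complex.exp_nat_mul]
      congr 1
      push_cast
      have hp0 : (p:ℂ) ≠ 0 := Nat.cast_ne_zero.mpr hp.ne'
      field_simp
    rw [this, abs_one_sub_exp]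
    congr 2
    · ring
  have hkey : ∏ j ∈ Finset.Ico 1 p, (2 * Real.sin (j * Real.pi / p)) = p := by
    have h1 := prod_one_sub_zeta hp hζ
    have h2 := congrArg (‖·‖) h1
    rw [norm_prod, Complex.norm_natCast] at h2
    have h3 : ∏ j ∈ Finset.Ico 1 p, ‖1 - ζ ^ j‖ =
        ∏ j ∈ Finset.Ico 1 p, (2 * Real.sin (j * Real.pi / p)) := by
      apply Finset.prod_congr rfl
      intro j hj
      rw [habs j]
      congr 1
      rw [abs_of_pos]
      apply Real.sin_pos_of_pos_of_lt_pi
      · have hj1 : 1 ≤ j := (Finset.mem_Ico.mp hj).1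
        positivity
      · have hj2 : j < p := (Finset.mem_Ico.mp hj).2
        rw [div_lt_iff₀ (by positivity)]
        have : (j:ℝ) < p := by exact_mod_cast hj2
        nlinarith [Real.pi_pos]
    rw [← h3]
    exact h2
  -- split the product
  have hsplit : ∏ j ∈ Finset.Ico 1 p, (2 * Real.sin (j * Real.pi / p)) =
      (∏ j ∈ Finset.Ico 1 (q+1), (2 * Real.sin (j * Real.pi / p))) *
      ∏ j ∈ Finset.Ico (q+1) p, (2 * Real.sin (j * Real.pi / p)) := by
    rw [Finset.prod_Ico_consecutive]
    · omega
    · omega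
  have hrefl : ∏ j ∈ Finset.Ico (q+1) p, (2 * Real.sin (j * Real.pi / p)) =
      ∏ j ∈ Finset.Ico 1 (q+1), (2 * Real.sin (j * Real.pi / p)) := by
    apply Finset.prod_nbij' (fun j => p - j) (fun j => p - j)
    · intro a ha; simp only [Finset.mem_Ico] at *; omega
    · intro a ha; simp only [Finset.mem_Ico] at *; omega
    · intro a ha; simp only [Finset.mem_Ico] at ha; omega
    · intro a ha; simp only [Finset.mem_Ico] at ha; omega
    · intro a ha
      simp only [Finset.mem_Ico] at ha
      congr 1
      have hcast : ((p - a : ℕ) : ℝ) = (p:ℝ) - a := by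
        rw [Nat.cast_sub]; omega
      rw [hcast]
      have hp0 : (p:ℝ) ≠ 0 := by positivity
      rw [show ((p:ℝ) - a) * Real.pi / p = Real.pi - a * Real.pi / p by field_simp]
      rw [Real.sin_pi_sub]
  have hsq : (∏ j ∈ Finset.Ico 1 (q+1), (2 * Real.sin (j * Real.pi / p)))^2 = p := by
    rw [sq]
    nth_rewrite 2 [← hrefl]
    rw [← hsplit]
    exact hkey
  have hpos : 0 < ∏ j ∈ Finset.Ico 1 (q+1), (2 * Real.sin (j * Real.pi / p)) := by
    apply Finset.prod_pos
    intro j hj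
    simp only [Finset.mem_Ico] at hj
    have : 0 < Real.sin (j * Real.pi / p) := by
      apply Real.sin_pos_of_pos_of_lt_pi
      · have : 1 ≤ j := hj.1; positivity
      · rw [div_lt_iff₀ (by positivity)]
        have : (j:ℝ) < p := by exact_mod_cast (by omega : j < p)
        nlinarith [Real.pi_pos]
    linarith
  have hsqrt : ∏ j ∈ Finset.Ico 1 (q+1), (2 * Real.sin (j * Real.pi / p)) = Real.sqrt p := by
    rw [← Real.sqrt_sq hpos.le, hsq]
  rw [Finset.prod_mul_distrib, Finset.prod_const, Nat.card_Ico] at hsqrt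
  rw [Finset.Ico_add_one_right_eq_Icc] at hsqrt
  simp only [Nat.add_sub_cancel] at hsqrt
  rw [← hsqrt]
  field_simp
  exact Finset.prod_congr rfl (fun x _ => by ring_nf)


lemma neg_one_pow_nat_eq {a b : ℕ} (h : (a : ZMod 2) = (b : ZMod 2)) :
    ((-1:ℝ))^a = (-1)^b := by
  have h2 : a % 2 = b % 2 := (ZMod.natCast_eq_natCast_iff a b 2).mp h
  conv_lhs => rw [← Nat.div_add_mod a 2]
  conv_rhs => rw [← Nat.div_add_mod b 2]
  rw [pow_add, pow_add, pow_mul, pow_mul]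
  norm_num [h2]

lemma parity_lemma (p q k : ℕ) [Fact p.Prime] (hpq : p = 2*q+1) (hk : 0 < k)
    (hA : (k : ZMod p) ≠ 0) :
    ((∑ x ∈ Finset.Ico 1 (q+1), k * x / p : ℕ) : ZMod 2) =
      (((k-1) * ∑ x ∈ Finset.Ico 1 (q+1), x : ℕ) : ZMod 2) +
        (#(Finset.filter (fun x : ℕ => q < ((k : ZMod p) * (x : ZMod p)).val)
          (Finset.Ico 1 (q+1))) : ZMod 2) := by
  have hp2 : (p : ℕ) / 2 = q := by omega
  haveI : NeZero p := ⟨by omega⟩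
  set A : ZMod p := (k : ZMod p) with hAdef
  set S := ∑ x ∈ Finset.Ico 1 (q+1), k * x / p with hS
  set T := ∑ x ∈ Finset.Ico 1 (q+1), x with hT
  set V := ∑ x ∈ Finset.Ico 1 (q+1), (A * (x : ZMod p)).val with hV
  set n := #(Finset.filter (fun x : ℕ => q < (A * (x : ZMod p)).val) (Finset.Ico 1 (q+1)))
    with hn
  have hpodd : ((p:ℕ) : ZMod 2) = 1 := by
    have : ((p:ℕ) : ZMod 2) = ((1:ℕ) : ZMod 2) :=
      (ZMod.natCast_eq_natCast_iff _ _ _).mpr (by unfold Nat.ModEq; omega)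
    simpa using this
  have hpoint : ∀ x : ℕ, k * x = p * (k * x / p) + (A * (x : ZMod p)).val := by
    intro x
    have h1 : (A * (x : ZMod p)).val = (k * x) % p := by
      rw [hAdef, ← Nat.cast_mul, ZMod.val_natCast]
    rw [h1]
    exact (Nat.div_add_mod (k*x) p).symm
  have h1 : k * T = p * S + V := by
    rw [hT, hS, hV, Finset.mul_sum, Finset.mul_sum, ← Finset.sum_add_distrib]
    exact Finset.sum_congr rfl fun x _ => hpoint x
  have hfact2 : ∀ x : ℕ, (A * (x : ZMod p)).val ≤ q →
      (A * (x : ZMod p)).valMinAbs.natAbs = (A * (x : ZMod p)).val := by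
    intro x hx
    have h := ZMod.val_eq_ite_valMinAbs (A * (x : ZMod p))
    rw [if_pos (by omega : (A * (x : ZMod p)).val ≤ p / 2)] at h
    omega
  have hfact3 : ∀ x : ℕ, q < (A * (x : ZMod p)).val →
      (A * (x : ZMod p)).valMinAbs.natAbs = p - (A * (x : ZMod p)).val := by
    intro x hx
    have h := ZMod.val_eq_ite_valMinAbs (A * (x : ZMod p))
    rw [if_neg (by omega : ¬ (A * (x : ZMod p)).val ≤ p / 2)] at h
    have hvlt : (A * (x : ZMod p)).val < p := ZMod.val_lt _
    omega
  have hs : ∑ x ∈ Finset.Ico 1 (q+1), (A * (x : ZMod p)).valMinAbs.natAbs = T := by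
    have hm := ZMod.Ico_map_valMinAbs_natAbs_eq_Ico_map_id p A hA
    rw [hp2] at hm
    rw [hT, show q + 1 = Nat.succ q from rfl]
    exact congrArg Multiset.sum hm
  have h2 : (V : ZMod 2) = (T : ZMod 2) + (n : ZMod 2) := by
    have hpw : ∀ x ∈ Finset.Ico 1 (q+1), ((A * (x : ZMod p)).val : ZMod 2) =
        ((A * (x : ZMod p)).valMinAbs.natAbs : ZMod 2) +
          (if q < (A * (x : ZMod p)).val then (1 : ZMod 2) else 0) := by
      intro x _
      by_cases hx : q < (A * (x : ZMod p)).val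
      · rw [if_pos hx, hfact3 x hx]
        have hvlt : (A * (x : ZMod p)).val < p := ZMod.val_lt _
        have key : (((A * (x : ZMod p)).val : ℕ) : ZMod 2) =
            ((p - (A * (x : ZMod p)).val + 1 : ℕ) : ZMod 2) :=
          (ZMod.natCast_eq_natCast_iff _ _ _).mpr (by unfold Nat.ModEq; omega)
        rw [key]
        push_cast
        ring
      · rw [if_neg hx, hfact2 x (by omega)]
        simp
    have e1 : ∑ x ∈ Finset.Ico 1 (q+1), ((A * (x : ZMod p)).valMinAbs.natAbs : ZMod 2) =
        (T : ZMod 2) := by rw [← hs, Nat.cast_sum]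
    have e2 : ∑ x ∈ Finset.Ico 1 (q+1),
        (if q < (A * (x : ZMod p)).val then (1 : ZMod 2) else 0) = (n : ZMod 2) := by
      rw [hn, Finset.sum_boole]
    rw [hV, Nat.cast_sum, Finset.sum_congr rfl hpw, Finset.sum_add_distrib, e1, e2]
  have h1' : ((k:ZMod 2)) * (T : ZMod 2) = (S : ZMod 2) + (T : ZMod 2) + (n : ZMod 2) := by
    have hc := congrArg (fun m : ℕ => (m : ZMod 2)) h1
    push_cast at hc
    rw [hpodd, one_mul, h2] at hc
    linear_combination hc
  have hksub : (((k-1 : ℕ)) : ZMod 2) = (k : ZMod 2) + 1 := by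
    rw [Nat.cast_sub hk, CharTwo.sub_eq_add]
    norm_num
  push_cast
  rw [hksub]
  have h20 : (2 : ZMod 2) = 0 := rfl
  linear_combination -h1' - (T : ZMod 2) * h20 - (n : ZMod 2) * h20

lemma sin_shift (p m v : ℕ) (hp : (p:ℝ) ≠ 0) :
    Real.sin (((p*m+v : ℕ):ℝ) * Real.pi / p) = (-1:ℝ)^m * Real.sin ((v:ℝ)*Real.pi/p) := by
  have h : ((p*m+v : ℕ):ℝ) * Real.pi / p = (v:ℝ)*Real.pi/p + (m:ℕ)*Real.pi := by
    push_cast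
    field_simp
    ring
  rw [h, Real.sin_add_nat_mul_pi]

lemma sin_reflect (p v : ℕ) (hv : v ≤ p) (hp : (p:ℝ) ≠ 0) :
    Real.sin (((p - v : ℕ):ℝ) * Real.pi / p) = Real.sin ((v:ℝ)*Real.pi/p) := by
  rw [Nat.cast_sub hv, show (((p:ℝ)-(v:ℝ))*Real.pi/p) = Real.pi - (v:ℝ)*Real.pi/p by
    field_simp, Real.sin_pi_sub]

theorem sin_product_legendre (p q k : ℕ) [Fact p.Prime] (hpq : p = 2 * q + 1)
    (hk : 0 < k) :
    (Nat.Coprime k p →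
      ∏ j ∈ Finset.Icc 1 q, Real.sin (j * k * Real.pi / p) =
        (-1) ^ (((k - 1) * (p ^ 2 - 1)) / 8) * (legendreSym p k : ℝ) *
          (2 : ℝ) ^ (-(q : ℤ)) * Real.sqrt p) ∧
    (p ∣ k → ∏ j ∈ Finset.Icc 1 q, Real.sin (j * k * Real.pi / p) = 0) := by
  have hq : 0 < q := by
    have := (Fact.out : p.Prime).two_le; omega
  have hppos : 0 < p := by omega
  have hpR : (p:ℝ) ≠ 0 := Nat.cast_ne_zero.mpr hppos.ne'
  constructor
  · intro hcop
    have hp2 : p / 2 = q := by omega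
    haveI : NeZero p := ⟨by omega⟩
    have hA : (k : ZMod p) ≠ 0 := by
      intro h0
      have hdvd : p ∣ k := (ZMod.natCast_eq_zero_iff k p).mp h0
      have h1 : p ∣ Nat.gcd k p := Nat.dvd_gcd hdvd dvd_rfl
      rw [hcop] at h1
      have := Nat.le_of_dvd one_pos h1
      omega
    set A : ZMod p := (k : ZMod p) with hAdef
    set sfun : ℕ → ℕ := fun j => (A * (j : ZMod p)).valMinAbs.natAbs with hsfun
    set S := ∑ x ∈ Finset.Ico 1 (q+1), k * x / p with hS
    set T := ∑ x ∈ Finset.Ico 1 (q+1), x with hT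
    set n := #(Finset.filter (fun x : ℕ => q < (A * (x : ZMod p)).val) (Finset.Ico 1 (q+1)))
      with hn
    set E := ((k - 1) * (p ^ 2 - 1)) / 8 with hE
    have key : ∀ j ∈ Finset.Ico 1 (q+1), Real.sin ((j:ℝ) * k * Real.pi / p) =
        ((-1:ℝ)) ^ (k * j / p) * Real.sin ((sfun j : ℝ) * Real.pi / p) := by
      intro j hj
      have hval : (A * (j : ZMod p)).val = (k * j) % p := by
        rw [hAdef, ← Nat.cast_mul, ZMod.val_natCast]
      have hsum : k * j = p * (k * j / p) + (A * (j : ZMod p)).val := by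
        rw [hval]; exact (Nat.div_add_mod (k*j) p).symm
      have step1 : Real.sin ((j:ℝ) * k * Real.pi / p) =
          ((-1:ℝ)) ^ (k * j / p) * Real.sin (((A * (j : ZMod p)).val : ℝ) * Real.pi / p) := by
        have hss := sin_shift p (k * j / p) ((A * (j : ZMod p)).val) hpR
        rw [← hsum] at hss
        rw [show (j:ℝ) * k * Real.pi / p = ((k * j : ℕ):ℝ) * Real.pi / p by push_cast; ring]
        exact hss
      rw [step1]
      have hvlt : (A * (j : ZMod p)).val < p := ZMod.val_lt _
      have hiv := ZMod.val_eq_ite_valMinAbs (A * (j : ZMod p))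
      by_cases hv : (A * (j : ZMod p)).val ≤ q
      · rw [if_pos (by omega : (A * (j : ZMod p)).val ≤ p / 2)] at hiv
        have hsv : sfun j = (A * (j : ZMod p)).val := by
          show (A * (j : ZMod p)).valMinAbs.natAbs = (A * (j : ZMod p)).val
          omega
        rw [hsv]
      · rw [if_neg (by omega : ¬ (A * (j : ZMod p)).val ≤ p / 2)] at hiv
        have hsv : sfun j = p - (A * (j : ZMod p)).val := by
          show (A * (j : ZMod p)).valMinAbs.natAbs = p - (A * (j : ZMod p)).val
          omega
        rw [hsv, sin_reflect p ((A * (j : ZMod p)).val) (by omega) hpR]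
    have hprod_s : ∏ j ∈ Finset.Ico 1 (q+1), Real.sin ((sfun j : ℝ) * Real.pi / p) =
        ∏ j ∈ Finset.Ico 1 (q+1), Real.sin ((j:ℝ) * Real.pi / p) := by
      have hm := ZMod.Ico_map_valMinAbs_natAbs_eq_Ico_map_id p A hA
      rw [hp2] at hm
      have h' := congrArg (fun M : Multiset ℕ =>
        (M.map (fun t : ℕ => Real.sin ((t:ℝ) * Real.pi / p))).prod) hm
      simp only [Multiset.map_map, Function.comp] at h'
      rw [show q + 1 = Nat.succ q from rfl]
      exact h'
    have hT2 : T * 2 = q * (q + 1) := by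
      have hg := Finset.sum_range_id_mul_two (q+1)
      have hsp : ∑ i ∈ Finset.range (q+1), i = T := by
        rw [hT, Finset.range_eq_Ico, Finset.sum_eq_sum_Ico_succ_bot (by omega : 0 < q+1)]
        norm_num
      rw [hsp] at hg
      rw [hg, Nat.add_sub_cancel]
      ring
    have hEeq : E = (k - 1) * T := by
      have hp2' : p ^ 2 - 1 = 8 * T := by
        have h1 : p ^ 2 = 4*(T*2) + 1 := by rw [hT2, hpq]; ring
        omega
      rw [hE, hp2', show (k-1) * (8*T) = 8 * ((k-1)*T) by ring,
        Nat.mul_div_cancel_left _ (by norm_num : (0:ℕ) < 8)]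
    have hg := ZMod.gauss_lemma (p := p) (a := (k:ℤ)) (by omega : p ≠ 2)
      (by push_cast; exact hA)
    rw [hp2] at hg
    simp only [Int.cast_natCast] at hg
    have hleg : ((legendreSym p (k:ℤ) : ℤ) : ℝ) = (-1:ℝ) ^ n := by
      rw [hg]; push_cast; rfl
    have hpar := parity_lemma p q k hpq hk hA
    have hsign : ((-1:ℝ)) ^ S = (-1:ℝ) ^ (E + n) := by
      apply neg_one_pow_nat_eq
      have hcastE : ((E + n : ℕ) : ZMod 2) = (((k-1) * T : ℕ) : ZMod 2) + (n : ZMod 2) := by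
        rw [hEeq]; exact Nat.cast_add _ _
      rw [hS, hcastE]
      exact hpar
    rw [show Finset.Icc 1 q = Finset.Ico 1 (q+1) from (Finset.Ico_add_one_right_eq_Icc 1 q).symm]
    calc ∏ j ∈ Finset.Ico 1 (q+1), Real.sin ((j:ℝ) * k * Real.pi / p)
        = ∏ j ∈ Finset.Ico 1 (q+1),
            (((-1:ℝ)) ^ (k * j / p) * Real.sin ((sfun j : ℝ) * Real.pi / p)) :=
          Finset.prod_congr rfl key
      _ = (∏ j ∈ Finset.Ico 1 (q+1), ((-1:ℝ)) ^ (k * j / p)) *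
            ∏ j ∈ Finset.Ico 1 (q+1), Real.sin ((sfun j : ℝ) * Real.pi / p) :=
          Finset.prod_mul_distrib
      _ = ((-1:ℝ)) ^ S * (Real.sqrt p / 2^q) := by
          rw [Finset.prod_pow_eq_pow_sum, hprod_s]
          congr 1
          rw [← sin_prod_eq p q hpq hq,
            show Finset.Icc 1 q = Finset.Ico 1 (q+1) from (Finset.Ico_add_one_right_eq_Icc 1 q).symm]
      _ = (-1) ^ E * ((legendreSym p (k:ℤ) : ℤ) : ℝ) * (2 : ℝ) ^ (-(q : ℤ)) * Real.sqrt p := by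
          rw [hsign, hleg, pow_add, zpow_neg, zpow_natCast, div_eq_mul_inv]
          ring
  · intro hdvd
    apply Finset.prod_eq_zero (i := 1) (Finset.mem_Icc.mpr ⟨le_refl 1, hq⟩)
    obtain ⟨m, rfl⟩ := hdvd
    have harg : ((1:ℕ):ℝ) * ((p*m:ℕ):ℝ) * Real.pi / p = (m:ℝ) * Real.pi := by
      push_cast
      field_simp
    rw [harg, Real.sin_nat_mul_pi]
end

section
/- For an odd prime p and a natural number ℓ with 0 ≤ ℓ ≤ p−1, the sum over j from 1 to p−1 of ((ℓ+j)/p)·j equals p·Σ_{j=1}^{ℓ−1} (j/p) + Σ_{j=1}^{p−1} (j/p)·j, where (·/p) is the Legendre symbol. -/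
open Finset

lemma legendre_sum_zero' (p : ℕ) [Fact p.Prime] (hodd : Odd p) :
    ∑ j ∈ Finset.Icc 1 (p - 1), (legendreSym p (j : ℤ)) = 0 := by
  have hp : p.Prime := Fact.out
  have hp2 : p ≠ 2 := by rintro rfl; simp [Nat.odd_iff] at hodd
  have hchar : ringChar (ZMod p) ≠ 2 := by
    rw [ZMod.ringChar_zmod_n]; exact hp2
  have h0 : ∑ a : ZMod p, quadraticChar (ZMod p) a = 0 := quadraticChar_sum_zero hchar
  have hpp : p - 1 + 1 = p := Nat.succ_pred_eq_of_pos hp.pos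
  have h1 : ∑ j ∈ Finset.Icc 1 (p - 1), (legendreSym p (j : ℤ))
      = ∑ j ∈ Finset.range p, (legendreSym p (j : ℤ)) := by
    rw [Finset.range_eq_Ico, Finset.sum_eq_sum_Ico_succ_bot hp.pos]
    rw [show ((0:ℕ):ℤ) = 0 by norm_num, legendreSym.at_zero,
      show Ico (0+1) p = Icc 1 (p-1) from by rw [← hpp, Finset.Ico_add_one_right_eq_Icc]; simp]
    ring
  have h2 : ∑ j ∈ Finset.range p, (legendreSym p (j : ℤ))
      = ∑ a : ZMod p, quadraticChar (ZMod p) a := by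
    apply Finset.sum_nbij' (fun (j : ℕ) => ((j : ZMod p))) (fun a => a.val)
    · intro a _; exact Finset.mem_univ _
    · intro a _; exact Finset.mem_range.mpr (ZMod.val_lt a)
    · intro a ha; exact ZMod.val_cast_of_lt (Finset.mem_range.mp ha)
    · intro a _; exact ZMod.natCast_rightInverse a
    · intro a _; simp [legendreSym]
  rw [h1, h2, h0]

theorem legendre_weighted_sum_plus (p : ℕ) [Fact p.Prime] (hodd : Odd p)
    (l : ℕ) (hl : l ≤ p - 1) :
    ∑ j ∈ Finset.Icc 1 (p - 1), legendreSym p ((l : ℤ) + j) * j =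
      (p : ℤ) * ∑ j ∈ Finset.Icc 1 (l - 1), legendreSym p j +
        ∑ j ∈ Finset.Icc 1 (p - 1), legendreSym p j * j := by
  have hp : p.Prime := Fact.out
  have hp2 : p ≠ 2 := by rintro rfl; simp [Nat.odd_iff] at hodd
  have hp3 : 3 ≤ p := by have := hp.two_le; omega
  rcases Nat.eq_zero_or_pos l with rfl | hl0
  · simp
  have hlp : l ≤ p - 1 := hl
  -- periodicity
  have hper : ∀ k : ℕ, legendreSym p ((k : ℤ) + p) = legendreSym p k := by
    intro k
    rw [legendreSym.mod p ((k:ℤ)+p), legendreSym.mod p (k:ℤ)]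
    rw [Int.add_emod_right]
  -- two-way split of the LHS index set
  have hsplit : ∑ j ∈ Icc 1 (p-1), legendreSym p ((l : ℤ) + j) * j
      = ∑ j ∈ Icc 1 (p-1-l), legendreSym p ((l : ℤ) + j) * j
        + ∑ j ∈ Icc (p-l) (p-1), legendreSym p ((l : ℤ) + j) * j := by
    rw [show Icc 1 (p-1) = Ioc 0 (p-1) from by ext x; simp; omega,
        show Icc 1 (p-1-l) = Ioc 0 (p-1-l) from by ext x; simp; omega,
        show Icc (p-l) (p-1) = Ioc (p-1-l) (p-1) from by ext x; simp; omega]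
    exact (Finset.sum_Ioc_consecutive _ (by omega) (by omega)).symm
  -- first shifted sum
  have hshift1 : ∑ j ∈ Icc 1 (p-1-l), legendreSym p ((l : ℤ) + j) * j
      = ∑ k ∈ Icc (l+1) (p-1), legendreSym p (k:ℤ) * ((k:ℤ) - l) := by
    rw [show Icc (l+1) (p-1) = (Icc 1 (p-1-l)).map (addLeftEmbedding l) from by
      rw [Finset.map_add_left_Icc]; congr 1; omega, Finset.sum_map]
    apply Finset.sum_congr rfl
    intro j _
    simp only [addLeftEmbedding_apply]
    push_cast
    ring
  -- second shifted sum
  have hshift2 : ∑ j ∈ Icc (p-l) (p-1), legendreSym p ((l : ℤ) + j) * j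
      = ∑ k ∈ Icc 0 (l-1), legendreSym p (k:ℤ) * ((k:ℤ) - l + p) := by
    rw [show Icc (p-l) (p-1) = (Icc 0 (l-1)).map (addLeftEmbedding (p-l)) from by
      rw [Finset.map_add_left_Icc]; congr 1 <;> omega, Finset.sum_map]
    apply Finset.sum_congr rfl
    intro k _
    simp only [addLeftEmbedding_apply]
    have e1 : ((p-l+k : ℕ):ℤ) = (k:ℤ) - l + p := by
      push_cast [Nat.cast_sub (show l ≤ p by omega)]; ring
    rw [e1, show (l:ℤ) + ((k:ℤ) - l + p) = (k:ℤ) + p by ring, hper k]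
  -- drop the k = 0 term
  have h0 : ∑ k ∈ Icc 0 (l-1), legendreSym p (k:ℤ) * ((k:ℤ) - l + p)
      = ∑ k ∈ Icc 1 (l-1), legendreSym p (k:ℤ) * ((k:ℤ) - l + p) := by
    rw [show Icc 0 (l-1) = Ico 0 l from by ext x; simp; omega,
        Finset.sum_eq_sum_Ico_succ_bot hl0,
        show Ico (0+1) l = Icc 1 (l-1) from by ext x; simp; omega]
    norm_num [legendreSym.at_zero]
  -- distribute
  have hdist : ∑ k ∈ Icc 1 (l-1), legendreSym p (k:ℤ) * ((k:ℤ) - l + p)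
      = ∑ k ∈ Icc 1 (l-1), legendreSym p (k:ℤ) * ((k:ℤ) - l)
        + (p:ℤ) * ∑ k ∈ Icc 1 (l-1), legendreSym p (k:ℤ) := by
    rw [Finset.mul_sum, ← Finset.sum_add_distrib]
    apply Finset.sum_congr rfl; intros; ring
  -- three-way split
  have hsplit3 : ∑ k ∈ Icc 1 (p-1), legendreSym p (k:ℤ) * ((k:ℤ) - l)
      = ∑ k ∈ Icc 1 (l-1), legendreSym p (k:ℤ) * ((k:ℤ) - l)
        + legendreSym p (l:ℤ) * ((l:ℤ) - l)
        + ∑ k ∈ Icc (l+1) (p-1), legendreSym p (k:ℤ) * ((k:ℤ) - l) := by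
    have a1 := Finset.sum_Ioc_consecutive (fun k : ℕ => legendreSym p (k:ℤ) * ((k:ℤ) - (l:ℤ)))
      (show (0:ℕ) ≤ l-1 by omega) (show l-1 ≤ l by omega)
    have a2 := Finset.sum_Ioc_consecutive (fun k : ℕ => legendreSym p (k:ℤ) * ((k:ℤ) - (l:ℤ)))
      (show (0:ℕ) ≤ l by omega) (show l ≤ p-1 by omega)
    have aS : ∑ k ∈ Ioc (l-1) l, legendreSym p (k:ℤ) * ((k:ℤ) - l)
        = legendreSym p (l:ℤ) * ((l:ℤ) - l) := by
      rw [show Ioc (l-1) l = {l} from by ext x; simp; omega, Finset.sum_singleton]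
    rw [show Icc 1 (p-1) = Ioc 0 (p-1) from by ext x; simp; omega,
        show Icc 1 (l-1) = Ioc 0 (l-1) from by ext x; simp; omega,
        show Icc (l+1) (p-1) = Ioc l (p-1) from by ext x; simp]
    linarith [a1, a2, aS]
  have hA : ∑ k ∈ Icc 1 (p-1), legendreSym p (k:ℤ) * ((k:ℤ) - l)
      = ∑ k ∈ Icc 1 (p-1), legendreSym p (k:ℤ) * (k:ℤ) := by
    have hz := legendre_sum_zero' p hodd
    have e : ∑ k ∈ Icc 1 (p-1), legendreSym p (k:ℤ) * ((k:ℤ) - l)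
        = ∑ k ∈ Icc 1 (p-1), legendreSym p (k:ℤ) * (k:ℤ)
          - (l:ℤ) * ∑ k ∈ Icc 1 (p-1), legendreSym p (k:ℤ) := by
      rw [Finset.mul_sum, ← Finset.sum_sub_distrib]
      apply Finset.sum_congr rfl; intros; ring
    rw [e, hz]; ring
  have hFl : legendreSym p (l:ℤ) * ((l:ℤ) - l) = 0 := by ring
  rw [hsplit, hshift1, hshift2, h0, hdist]
  linarith [hsplit3, hA]
end

section
/- For an odd prime p and a natural number ℓ with 0 ≤ ℓ ≤ p−1, the sum over j from 1 to p−1 of ((ℓ−j)/p)·j equals (−1/p)·(p·Σ_{j=1}^{p−ℓ−1} (j/p) + Σ_{j=1}^{p−1} (j/p)·j), where (·/p) is the Legendre symbol. -/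
open Finset

private lemma chi_sum_zero (p : ℕ) [Fact p.Prime] (hodd : Odd p) :
    ∑ j ∈ Finset.Ioc 0 (p - 1), (legendreSym p j : ℤ) = 0 := by
  have hp : 0 < p := (Fact.out : p.Prime).pos
  haveI : NeZero p := ⟨hp.ne'⟩
  have h0 : ∑ j ∈ Finset.range p, (legendreSym p j : ℤ)
      = ∑ a : ZMod p, quadraticChar (ZMod p) a := by
    refine Finset.sum_nbij' (fun i : ℕ => (i : ZMod p)) (fun a => a.val) ?_ ?_ ?_ ?_ ?_
    · intro a _; exact Finset.mem_univ _
    · intro a _; exact Finset.mem_range.mpr (ZMod.val_lt a)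
    · intro a ha; exact ZMod.val_natCast_of_lt (Finset.mem_range.mp ha)
    · intro a _; exact ZMod.natCast_zmod_val a
    · intro a _; simp [legendreSym]
  have h1 : ringChar (ZMod p) ≠ 2 := by
    rw [ZMod.ringChar_zmod_n]
    rintro rfl
    exact (Nat.not_even_iff_odd.mpr hodd) even_two
  have h3 : ∑ j ∈ Finset.range p, (legendreSym p j : ℤ) = 0 := by
    rw [h0, quadraticChar_sum_zero h1]
  have h4 : Finset.range p = insert 0 (Finset.Ioc 0 (p-1)) := by
    ext x
    simp only [Finset.mem_range, Finset.mem_insert, Finset.mem_Ioc]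
    omega
  rw [h4, Finset.sum_insert (by simp)] at h3
  simpa using h3

private lemma chi_period (p : ℕ) [Fact p.Prime] (a : ℤ) :
    legendreSym p (a + p) = legendreSym p a := by
  simp only [legendreSym]
  push_cast
  simp

theorem legendre_weighted_sum_minus (p : ℕ) [Fact p.Prime] (hodd : Odd p)
    (l : ℕ) (hl : l ≤ p - 1) :
    ∑ j ∈ Finset.Icc 1 (p - 1), legendreSym p ((l : ℤ) - j) * j =
      legendreSym p (-1) *
        ((p : ℤ) * ∑ j ∈ Finset.Icc 1 (p - l - 1), legendreSym p j +
          ∑ j ∈ Finset.Icc 1 (p - 1), legendreSym p j * j) := by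
  have hp : 0 < p := (Fact.out : p.Prime).pos
  have hp2 : 2 ≤ p := (Fact.out : p.Prime).two_le
  rw [show Finset.Icc 1 (p-1) = Finset.Ioc 0 (p-1) from Finset.Icc_add_one_left_eq_Ioc 0 (p-1),
      show Finset.Icc 1 (p-l-1) = Finset.Ioc 0 (p-l-1) from Finset.Icc_add_one_left_eq_Ioc 0 (p-l-1)]
  -- pull out χ(-1)
  have hstep1 : ∑ j ∈ Finset.Ioc 0 (p-1), legendreSym p ((l : ℤ) - j) * j
      = legendreSym p (-1) * ∑ j ∈ Finset.Ioc 0 (p-1), legendreSym p ((j : ℤ) - l) * j := by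
    rw [Finset.mul_sum]
    refine Finset.sum_congr rfl fun j _ => ?_
    rw [show (l : ℤ) - j = (-1) * ((j : ℤ) - l) by ring, legendreSym.mul, mul_assoc]
  rw [hstep1]
  congr 1
  -- main identity
  by_cases hl0 : l = 0
  · subst hl0
    simp only [Nat.cast_zero, sub_zero, Nat.sub_zero]
    rw [chi_sum_zero p hodd]
    ring
  -- now 1 ≤ l
  have hl1 : 1 ≤ l := Nat.one_le_iff_ne_zero.mpr hl0
  set m := p - l with hm
  have hm1 : 1 ≤ m := by omega
  have hmp : m ≤ p - 1 := by omega
  have hml : m + l = p := by omega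
  have hmc : ((p : ℤ)) - l = m := by push_cast [hm]; omega
  -- periodicity consequence
  have hper : ∀ j : ℕ, legendreSym p ((j : ℤ) - l) = legendreSym p ((j : ℤ) + m) := by
    intro j
    rw [← chi_period p ((j : ℤ) - l)]
    congr 1
    push_cast [hm]
    omega
  -- split S at l
  have hsplit : ∑ j ∈ Finset.Ioc 0 l, legendreSym p ((j : ℤ) - l) * j
      + ∑ j ∈ Finset.Ioc l (p-1), legendreSym p ((j : ℤ) - l) * j
      = ∑ j ∈ Finset.Ioc 0 (p-1), legendreSym p ((j : ℤ) - l) * j :=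
    Finset.sum_Ioc_consecutive _ (Nat.zero_le l) hl
  -- B : reindex Ioc l (p-1) by k+l
  have hB : ∑ j ∈ Finset.Ioc l (p-1), legendreSym p ((j : ℤ) - l) * j
      = ∑ k ∈ Finset.Ioc 0 (m-1), legendreSym p k * ((k : ℤ) + l) := by
    have hmap : (Finset.Ioc 0 (m-1)).map (addRightEmbedding l) = Finset.Ioc l (p-1) := by
      rw [Finset.map_add_right_Ioc]
      congr 1 <;> omega
    rw [← hmap, Finset.sum_map]
    refine Finset.sum_congr rfl fun k _ => ?_
    simp only [addRightEmbedding_apply]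
    have h1 : ((k + l : ℕ) : ℤ) - l = (k : ℤ) := by push_cast; ring
    rw [h1]
    push_cast
    ring
  -- A : reindex Ioc 0 l by k+m, giving Ioc m p
  have hA : ∑ j ∈ Finset.Ioc 0 l, legendreSym p ((j : ℤ) - l) * j
      = ∑ k ∈ Finset.Ioc m p, legendreSym p k * ((k : ℤ) - m) := by
    have hmap : (Finset.Ioc 0 l).map (addRightEmbedding m) = Finset.Ioc m p := by
      rw [Finset.map_add_right_Ioc]
      congr 1 <;> omega
    rw [← hmap, Finset.sum_map]
    refine Finset.sum_congr rfl fun j _ => ?_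
    simp only [addRightEmbedding_apply]
    rw [hper j]
    have h1 : ((j + m : ℕ) : ℤ) = (j : ℤ) + m := by push_cast; ring
    rw [h1]
    ring
  -- peel top of Ioc m p : χ(p) = 0
  have hchip : (legendreSym p (p : ℤ)) = 0 := by
    rw [legendreSym.eq_zero_iff]
    push_cast
    simp
  have hA2 : ∑ k ∈ Finset.Ioc m p, legendreSym p k * ((k : ℤ) - m)
      = ∑ k ∈ Finset.Ioc m (p-1), legendreSym p k * ((k : ℤ) - m) := by
    have hsing : Finset.Ioc (p-1) p = {p} := by
      ext x; simp only [Finset.mem_Ioc, Finset.mem_singleton]; omega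
    rw [← Finset.sum_Ioc_consecutive (fun k : ℕ => legendreSym p k * ((k : ℤ) - m)) hmp
        (by omega : p - 1 ≤ p), hsing, Finset.sum_singleton, hchip]
    ring
  -- split U and Z at m-1 and peel bottom (element m)
  have hIoc : Finset.Ioc (m-1) (p-1) = insert m (Finset.Ioc m (p-1)) := by
    ext x
    simp only [Finset.mem_Ioc, Finset.mem_insert]
    omega
  have hU : ∑ k ∈ Finset.Ioc 0 (p-1), legendreSym p k * (k : ℤ)
      = ∑ k ∈ Finset.Ioc 0 (m-1), legendreSym p k * (k : ℤ)
        + (legendreSym p (m : ℤ) * m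
          + ∑ k ∈ Finset.Ioc m (p-1), legendreSym p k * (k : ℤ)) := by
    rw [← Finset.sum_Ioc_consecutive _ (Nat.zero_le (m-1)) (by omega : m - 1 ≤ p - 1),
        hIoc, Finset.sum_insert (by simp)]
  have hZ : ∑ k ∈ Finset.Ioc 0 (p-1), (legendreSym p k : ℤ)
      = ∑ k ∈ Finset.Ioc 0 (m-1), (legendreSym p k : ℤ)
        + ((legendreSym p (m : ℤ) : ℤ)
          + ∑ k ∈ Finset.Ioc m (p-1), (legendreSym p k : ℤ)) := by
    rw [← Finset.sum_Ioc_consecutive _ (Nat.zero_le (m-1)) (by omega : m - 1 ≤ p - 1),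
        hIoc, Finset.sum_insert (by simp)]
  have hZ0 := chi_sum_zero p hodd
  rw [hZ] at hZ0
  have hplm : p - l - 1 = m - 1 := by omega
  rw [hplm, ← hsplit, hA, hA2, hB, hU]
  -- expand products of sums
  rw [Finset.sum_congr rfl (fun k _ => by ring :
        ∀ k ∈ Finset.Ioc m (p-1), legendreSym p k * ((k : ℤ) - m)
          = legendreSym p k * k - (m : ℤ) * legendreSym p k),
      Finset.sum_congr rfl (fun k _ => by ring :
        ∀ k ∈ Finset.Ioc 0 (m-1), legendreSym p k * ((k : ℤ) + l)
          = legendreSym p k * k + (l : ℤ) * legendreSym p k),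
      Finset.sum_sub_distrib, Finset.sum_add_distrib, ← Finset.mul_sum, ← Finset.mul_sum]
  linear_combination (-(m : ℤ)) * hZ0
    - (∑ k ∈ Finset.Ioc 0 (m-1), (legendreSym p k : ℤ)) * hmc
end

section
/- Let p = 2q+1 be an odd prime and l a natural number. Then Σ_{k=0}^{p-1} (−1)^k (k/p) e^((2l+1)πik/p) = p·((q−l)/p)/G(1,p), where G(1,p) = Σ_{k=0}^{p−1}(k/p)e^(2πik/p) is the quadratic Gauss sum and (·/p) the Legendre symbol. -/
open Finset Complex

lemma sum_range_eq_sum_zmod (p : ℕ) [NeZero p] (f : ZMod p → ℂ) :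
    ∑ k ∈ Finset.range p, f (k : ZMod p) = ∑ a : ZMod p, f a := by
  refine Finset.sum_nbij' (fun k => (k : ZMod p)) (fun a => a.val) ?_ ?_ ?_ ?_ ?_
  · intro a _; exact Finset.mem_univ _
  · intro a _; exact Finset.mem_range.mpr (ZMod.val_lt a)
  · intro a ha; exact ZMod.val_cast_of_lt (Finset.mem_range.mp ha)
  · intro a _; exact ZMod.natCast_zmod_val a
  · intro a _; rfl

theorem alternating_gauss_sum (p q l : ℕ) [Fact p.Prime] (hpq : p = 2 * q + 1) :
    ∑ k ∈ Finset.range p, (-1 : ℂ) ^ k * (legendreSym p k : ℂ) *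
        Complex.exp ((2 * l + 1) * Real.pi * Complex.I * k / p) =
      (p : ℂ) * (legendreSym p ((q : ℤ) - l) : ℂ) /
        ∑ k ∈ Finset.range p, (legendreSym p k : ℂ) *
          Complex.exp (2 * Real.pi * Complex.I * k / p) := by
  have hp : p.Prime := Fact.out
  have hppos : 0 < p := hp.pos
  have : NeZero p := ⟨hppos.ne'⟩
  have hpC : (p : ℂ) ≠ 0 := Nat.cast_ne_zero.mpr hppos.ne'
  set χ : MulChar (ZMod p) ℂ :=
    (quadraticChar (ZMod p)).ringHomComp (Int.castRingHom ℂ) with hχdef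
  set ψ : AddChar (ZMod p) ℂ := ZMod.stdAddChar with hψdef
  have hleg : ∀ n : ℤ, (legendreSym p n : ℂ) = χ ((n : ZMod p)) := by
    intro n
    simp [hχdef, legendreSym, MulChar.ringHomComp_apply]
  have hψnat : ∀ n : ℕ, ψ ((n : ZMod p)) = Complex.exp (2 * Real.pi * Complex.I * n / p) := by
    intro n
    have := ZMod.stdAddChar_coe (N := p) (n : ℤ)
    simpa using this
  -- p is odd, so p ≠ 2
  have hp2 : p ≠ 2 := by omega
  have hχne : χ ≠ 1 := by
    refine (MulChar.ringHomComp_ne_one_iff (RingHom.injective_int _)).mpr ?_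
    refine quadraticChar_ne_one ?_
    rw [ZMod.ringChar_zmod_n]; exact hp2
  have hχquad : χ.IsQuadratic := (quadraticChar_isQuadratic (ZMod p)).comp _
  have hprim : ψ.IsPrimitive := ZMod.isPrimitive_stdAddChar p
  have hcard : (Fintype.card (ZMod p) : ℂ) = (p : ℂ) := by rw [ZMod.card]
  have hGne : gaussSum χ ψ ≠ 0 :=
    gaussSum_ne_zero_of_nontrivial (by rw [hcard]; exact hpC) hχne hprim
  have hGsq : gaussSum χ ψ ^ 2 = χ (-1) * (p : ℂ) := by
    rw [gaussSum_sq hχne hχquad hprim, hcard]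
  -- the denominator equals the Gauss sum
  have hden : (∑ k ∈ Finset.range p, (legendreSym p k : ℂ) *
      Complex.exp (2 * Real.pi * Complex.I * k / p)) = gaussSum χ ψ := by
    rw [gaussSum, ← sum_range_eq_sum_zmod p (fun a => χ a * ψ a)]
    refine Finset.sum_congr rfl fun k _ => ?_
    rw [hleg (k : ℤ), hψnat k]; push_cast; ring_nf
  set a : ZMod p := ((l + q + 1 : ℕ) : ZMod p) with ha
  clear_value a
  -- the LHS equals the twisted Gauss sum
  have hlhs : (∑ k ∈ Finset.range p, (-1 : ℂ) ^ k * (legendreSym p k : ℂ) *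
      Complex.exp ((2 * l + 1) * Real.pi * Complex.I * k / p)) =
      gaussSum χ (ψ.mulShift a) := by
    rw [gaussSum, ← sum_range_eq_sum_zmod p (fun x => χ x * (ψ.mulShift a) x)]
    refine Finset.sum_congr rfl fun k _ => ?_
    have hmul : a * (k : ZMod p) = (((l + q + 1) * k : ℕ) : ZMod p) := by
      rw [ha]; push_cast; ring
    rw [AddChar.mulShift_apply, hmul, hψnat ((l + q + 1) * k), hleg (k : ℤ)]
    have hexp : (-1 : ℂ) ^ k * Complex.exp ((2 * l + 1) * Real.pi * Complex.I * k / p) =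
        Complex.exp (2 * Real.pi * Complex.I * (((l + q + 1) * k : ℕ) : ℂ) / p) := by
      have hneg : (-1 : ℂ) ^ k = Complex.exp ((k : ℂ) * (Real.pi * Complex.I)) := by
        rw [Complex.exp_nat_mul, Complex.exp_pi_mul_I]
      rw [hneg, ← Complex.exp_add]
      congr 1
      have hpC' : (p : ℂ) = 2 * q + 1 := by rw [hpq]; push_cast; ring
      field_simp
      rw [hpC']; push_cast; ring
    rw [← hexp]; norm_cast; ring
  rw [hden, hlhs]
  -- relate the numerator's Legendre symbol to χ (-a)
  have hnum : (legendreSym p ((q : ℤ) - l) : ℂ) = χ (-a) := by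
    rw [hleg]
    congr 1
    have h0 : ((2 * q + 1 : ℕ) : ZMod p) = 0 := by rw [← hpq]; exact ZMod.natCast_self p
    rw [ha]
    push_cast at h0 ⊢
    linear_combination h0
  rw [hnum]
  by_cases haz : a = 0
  · -- degenerate case: both sides are zero
    have h1 : ψ.mulShift a = 1 := by
      ext x; rw [AddChar.mulShift_apply, haz, zero_mul, AddChar.map_zero_eq_one]; rfl
    rw [h1, haz, neg_zero, MulChar.map_zero, mul_zero, zero_div]
    have : gaussSum χ (1 : AddChar (ZMod p) ℂ) = ∑ x : ZMod p, χ x := by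
      refine Finset.sum_congr rfl fun x _ => ?_
      rw [AddChar.one_apply, mul_one]
    rw [this, MulChar.sum_eq_zero_of_ne_one hχne]
  · -- a is a unit
    have hu' : IsUnit a := isUnit_iff_ne_zero.mpr haz
    obtain ⟨v, hv⟩ := hu'
    have hshift : χ a * gaussSum χ (ψ.mulShift a) = gaussSum χ ψ := by
      have := gaussSum_mulShift χ ψ v
      rwa [hv] at this
    have hχa2 : χ a * χ a = 1 := by
      rcases hχquad a with h | h | h
      · exfalso
        rw [hχdef, MulChar.ringHomComp_apply] at h
        have : quadraticChar (ZMod p) a = 0 := by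
          simp only [Int.coe_castRingHom] at h
          exact_mod_cast h
        rw [quadraticChar_eq_zero_iff] at this
        exact haz this
      · rw [h]; ring
      · rw [h]; ring
    have hgs : gaussSum χ (ψ.mulShift a) = χ a * gaussSum χ ψ := by
      have h2 : χ a * (χ a * gaussSum χ (ψ.mulShift a)) = χ a * gaussSum χ ψ := by
        rw [hshift]
      rwa [← mul_assoc, hχa2, one_mul] at h2
    rw [hgs, eq_div_iff hGne]
    have hχneg : χ (-a) = χ (-1) * χ a := by
      rw [← map_mul]; ring_nf
    calc χ a * gaussSum χ ψ * gaussSum χ ψ = χ a * (gaussSum χ ψ ^ 2) := by ring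
      _ = χ a * (χ (-1) * (p : ℂ)) := by rw [hGsq]
      _ = (p : ℂ) * (χ (-1) * χ a) := by ring
      _ = (p : ℂ) * χ (-a) := by rw [hχneg]
end
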